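/- Let ℓ be strictly positive edge lengths on G, p the minimum ℓ-distance between distinct terminals, and P an ℓ-geodesic from terminal s to terminal t. If P contains no node at ℓ-distance exactly p/2 from the terminal set, then P decomposes as P1 ∘ (u, e, v) ∘ P2 where all nodes of P1 (including u) are at distance < p/2 from s, all nodes of P2 (including v) are at distance < p/2 from t, s ≠ t, and dist_ℓ(s,u) + ℓ(e) + dist_ℓ(v,t) = p. Moreover, along P1 the distances from s are strictly increasing and along P2 the distances to t are strictly decreasing. -/

import Mathlib

open SimpleGraph

/-- A `T`-path: its endpoints are distinct terminals and all internal nodes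
are non-terminals. -/
def IsTPath {V : Type} (G : SimpleGraph V) (T : Set V) {s t : V}
    (P : G.Walk s t) : Prop :=
  s ∈ T ∧ t ∈ T ∧ s ≠ t ∧ P.IsPath ∧
    ∀ v ∈ P.support, v ≠ s → v ≠ t → v ∉ T

/-- The `ℓ`-length of a walk: the sum of the lengths of its edges. -/
noncomputable def walkLen {V : Type} (ell : V → V → ℚ) {G : SimpleGraph V}
    {u v : V} (P : G.Walk u v) : ℚ :=
  (P.darts.map fun d => ell d.toProd.1 d.toProd.2).sum

/-- `d` is the shortest-path distance function of `G` with respect to the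
edge lengths `ell`. -/
def IsDistFun {V : Type} (G : SimpleGraph V) (ell : V → V → ℚ)
    (d : V → V → ℚ) : Prop :=
  ∀ u v : V, IsLeast {x : ℚ | ∃ P : G.Walk u v, walkLen ell P = x} (d u v)

section Helpers

variable {V : Type} {G : SimpleGraph V} (ell : V → V → ℚ)

lemma walkLen_nil {u : V} : walkLen ell (Walk.nil : G.Walk u u) = 0 := rfl

lemma walkLen_cons {u v w : V} (h : G.Adj u v) (P : G.Walk v w) :
    walkLen ell (Walk.cons h P) = ell u v + walkLen ell P := by
  simp [walkLen]

lemma walkLen_append {u v w : V} (P : G.Walk u v) (Q : G.Walk v w) :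
    walkLen ell (P.append Q) = walkLen ell P + walkLen ell Q := by
  simp [walkLen, Walk.darts_append]

lemma walkLen_nonneg (hpos : ∀ u v, G.Adj u v → 0 < ell u v) {u v : V}
    (P : G.Walk u v) : 0 ≤ walkLen ell P := by
  apply List.sum_nonneg
  intro x hx
  simp only [List.mem_map] at hx
  obtain ⟨dd, _, rfl⟩ := hx
  exact (hpos _ _ dd.adj).le

lemma walkLen_pos (hpos : ∀ u v, G.Adj u v → 0 < ell u v) {u v : V}
    (huv : u ≠ v) (P : G.Walk u v) : 0 < walkLen ell P := by
  cases P with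
  | nil => exact absurd rfl huv
  | cons h P' =>
    rw [walkLen_cons]
    exact add_pos_of_pos_of_nonneg (hpos _ _ h) (walkLen_nonneg ell hpos P')

lemma walkLen_reverse (hsym : ∀ u v, ell u v = ell v u) {u v : V}
    (P : G.Walk u v) : walkLen ell P.reverse = walkLen ell P := by
  rw [walkLen, walkLen, Walk.darts_reverse, List.map_reverse, List.sum_reverse,
    List.map_map]
  exact congrArg List.sum (List.map_congr_left (fun dd _ => hsym _ _))

lemma walkLen_eq_edges_sum (hsym : ∀ u v, ell u v = ell v u) {u v : V}
    (P : G.Walk u v) :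
    walkLen ell P = (P.edges.map (Sym2.lift ⟨ell, fun a b => hsym a b⟩)).sum := by
  rw [walkLen, Walk.edges, List.map_map]
  refine congrArg List.sum (List.map_congr_left (fun dd _ => ?_)).symm
  exact Sym2.lift_mk ⟨ell, fun a b => hsym a b⟩ dd.toProd.1 dd.toProd.2

lemma list_sum_le {α : Type} [DecidableEq α] (f : α → ℚ) :
    ∀ (l₂ l₁ : List α), l₁.Nodup → l₁ ⊆ l₂ → (∀ x ∈ l₂, 0 ≤ f x) →
      (l₁.map f).sum ≤ (l₂.map f).sum := by
  intro l₂
  induction l₂ with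
  | nil =>
    intro l₁ _ hsub _
    rw [List.subset_nil.mp hsub]
  | cons a l₂ ih =>
    intro l₁ hnd hsub hnn
    by_cases ha : a ∈ l₁
    · have hperm : List.Perm l₁ (a :: l₁.erase a) := List.perm_cons_erase ha
      have hsum : (l₁.map f).sum = f a + ((l₁.erase a).map f).sum := by
        rw [(hperm.map f).sum_eq]; simp
      have hnd' : (l₁.erase a).Nodup := hnd.erase a
      have hsub' : l₁.erase a ⊆ l₂ := by
        intro x hx
        have hxa : x ≠ a ∧ x ∈ l₁ := (List.Nodup.mem_erase_iff hnd).mp hx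
        rcases List.mem_cons.mp (hsub hxa.2) with h | h
        · exact absurd h hxa.1
        · exact h
      have := ih (l₁.erase a) hnd' hsub' (fun x hx => hnn x (List.mem_cons_of_mem a hx))
      simp only [List.map_cons, List.sum_cons]
      linarith [hsum]
    · have hsub' : l₁ ⊆ l₂ := by
        intro x hx
        rcases List.mem_cons.mp (hsub hx) with h | h
        · exact absurd (h ▸ hx) ha
        · exact h
      have := ih l₁ hnd hsub' (fun x hx => hnn x (List.mem_cons_of_mem a hx))
      have h0 : 0 ≤ f a := hnn a List.mem_cons_self
      simp only [List.map_cons, List.sum_cons]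
      linarith

lemma walkLen_bypass_le [DecidableEq V]
    (hpos : ∀ u v, G.Adj u v → 0 < ell u v)
    (hsym : ∀ u v, ell u v = ell v u) {u v : V} (P : G.Walk u v) :
    walkLen ell P.bypass ≤ walkLen ell P := by
  rw [walkLen_eq_edges_sum ell hsym, walkLen_eq_edges_sum ell hsym]
  apply list_sum_le _ _ _ P.bypass_isPath.isTrail.edges_nodup P.edges_bypass_subset
  intro e he
  have hmem := P.edges_subset_edgeSet he
  induction e with
  | h a b =>
    rw [Sym2.lift_mk]
    exact (hpos a b (G.mem_edgeSet.mp hmem)).le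

/-- Along a walk whose length equals the distance between its endpoints,
distances to the far endpoint decrease strictly. -/
lemma mono_aux (hpos : ∀ u v, G.Adj u v → 0 < ell u v)
    (d : V → V → ℚ) (hd : IsDistFun G ell d) :
    ∀ {z w : V} (R : G.Walk z w), walkLen ell R = d z w →
      (∀ x ∈ R.support, d x w ≤ d z w) ∧
        R.support.Chain' (fun a b => d b w < d a w) := by
  have hd_le : ∀ {a b : V} (W : G.Walk a b), d a b ≤ walkLen ell W :=
    fun W => (hd _ _).2 ⟨W, rfl⟩
  intro z w R
  induction R with
  | nil =>
    intro _
    constructor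
    · intro x hx
      simp only [Walk.support_nil, List.mem_singleton] at hx
      subst hx; exact le_refl _
    · exact List.isChain_singleton _
  | @cons a b c h R' ih =>
    intro hlen
    rw [walkLen_cons] at hlen
    have h1 : d b c ≤ walkLen ell R' := hd_le R'
    have h2 : d a c ≤ ell a b + d b c := by
      obtain ⟨W', hW'⟩ := (hd b c).1
      calc d a c ≤ walkLen ell (Walk.cons h W') := hd_le _
        _ = ell a b + walkLen ell W' := walkLen_cons ell h W'
        _ = ell a b + d b c := by rw [hW']
    have hlen' : walkLen ell R' = d b c := by linarith
    have hba : d b c < d a c := by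
      have := hpos a b h
      linarith
    obtain ⟨hall, hchain⟩ := ih hlen'
    constructor
    · intro x hx
      rw [Walk.support_cons] at hx
      rcases List.mem_cons.mp hx with rfl | hx
      · exact le_refl _
      · exact le_trans (hall x hx) hba.le
    · rw [Walk.support_cons, R'.support_eq_cons, List.Chain', List.isChain_cons_cons]
      exact ⟨hba, by rw [← R'.support_eq_cons]; exact hchain⟩

end Helpers

/-- an `ℓ`-geodesic from `s` to `t` containing no central node
decomposes as `P1 ∘ (u,e,v) ∘ P2`, where `P1` lies in the zone of `s`, `P2`
lies in the zone of `t`, `dist(s,u) + ℓ(e) + dist(v,t) = p`, distances from `s`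
strictly increase along `P1`, and distances to `t` strictly decrease along `P2`. -/
theorem geodesic_without_central_node_decomposition
    {V : Type} [Fintype V] (G : SimpleGraph V) (T : Set V)
    (ell : V → V → ℚ) (hpos : ∀ u v, G.Adj u v → 0 < ell u v)
    (hsym : ∀ u v, ell u v = ell v u)
    (d : V → V → ℚ) (hd : IsDistFun G ell d)
    (p : ℚ)
    (hp : IsLeast {x : ℚ | ∃ (s t : V) (P : G.Walk s t),
      IsTPath G T P ∧ walkLen ell P = x} p)
    (pi : V → ℚ) (hpi : ∀ v, IsLeast {x : ℚ | ∃ t ∈ T, d v t = x} (pi v))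
    {s t : V} (P : G.Walk s t) (hP : IsTPath G T P)
    (hgeo : walkLen ell P = p)
    (hnocentral : ∀ x ∈ P.support, pi x ≠ p/2) :
    s ≠ t ∧
    ∃ (u v : V) (h : G.Adj u v) (P1 : G.Walk s u) (P2 : G.Walk v t),
      P = P1.append (SimpleGraph.Walk.cons h P2) ∧
      (∀ x ∈ P1.support, d s x < p/2) ∧
      (∀ x ∈ P2.support, d x t < p/2) ∧
      d s u + ell u v + d v t = p ∧
      P1.support.Chain' (fun x y => d s x < d s y) ∧
      P2.support.Chain' (fun x y => d y t < d x t) := by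
  classical
  obtain ⟨hs, ht, hst, hpath, hintern⟩ := hP
  -- basic facts about d
  have hd_le : ∀ {a b : V} (W : G.Walk a b), d a b ≤ walkLen ell W :=
    fun W => (hd _ _).2 ⟨W, rfl⟩
  have hd_nonneg : ∀ a b : V, 0 ≤ d a b := by
    intro a b
    obtain ⟨W, hW⟩ := (hd a b).1
    rw [← hW]
    exact walkLen_nonneg ell hpos W
  have hd_symm : ∀ a b : V, d a b = d b a := by
    have key : ∀ a b : V, d a b ≤ d b a := by
      intro a b
      obtain ⟨W, hW⟩ := (hd b a).1
      calc d a b ≤ walkLen ell W.reverse := hd_le _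
        _ = walkLen ell W := walkLen_reverse ell hsym W
        _ = d b a := hW
    exact fun a b => le_antisymm (key a b) (key b a)
  have hd_self : ∀ a : V, d a a = 0 := by
    intro a
    refine le_antisymm ?_ (hd_nonneg a a)
    have := hd_le (Walk.nil : G.Walk a a)
    rwa [walkLen_nil] at this
  have hppos : 0 < p := by
    rw [← hgeo]
    exact walkLen_pos ell hpos hst P
  -- lower bound: every walk between distinct terminals has length at least p
  have L : ∀ (n : ℕ) {a b : V} (W : G.Walk a b), W.length ≤ n →
      a ∈ T → b ∈ T → a ≠ b → p ≤ walkLen ell W := by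
    intro n
    induction n with
    | zero =>
      intro a b W hlen ha hb hab
      cases W with
      | nil => exact absurd rfl hab
      | cons h W' => simp at hlen
    | succ m ih =>
      intro a b W hlen ha hb hab
      by_cases hT : ∀ v ∈ W.bypass.support, v ≠ a → v ≠ b → v ∉ T
      · have hTP : IsTPath G T W.bypass := ⟨ha, hb, hab, W.bypass_isPath, hT⟩
        calc p ≤ walkLen ell W.bypass := hp.2 ⟨a, b, W.bypass, hTP, rfl⟩
          _ ≤ walkLen ell W := walkLen_bypass_le ell hpos hsym W
      · push_neg at hT
        obtain ⟨v, hv, hva, hvb, hvT⟩ := hT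
        have hsplit := (W.bypass.take_spec hv).symm
        have hlen2 : 1 ≤ (W.bypass.dropUntil v hv).length := by
          by_contra hcon
          push_neg at hcon
          interval_cases hlc : (W.bypass.dropUntil v hv).length
          · exact hvb ((W.bypass.dropUntil v hv).eq_of_length_eq_zero hlc) |>.elim
        have hlen1 : (W.bypass.takeUntil v hv).length ≤ m := by
          have hq := congrArg Walk.length hsplit
          rw [Walk.length_append] at hq
          have hbl : W.bypass.length ≤ W.length := W.length_bypass_le
          omega
        have h1 : p ≤ walkLen ell (W.bypass.takeUntil v hv) :=
          ih _ hlen1 ha hvT (fun hh => hva hh.symm)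
        have h2 : 0 ≤ walkLen ell (W.bypass.dropUntil v hv) :=
          walkLen_nonneg ell hpos _
        have h3 : walkLen ell (W.bypass.takeUntil v hv) +
            walkLen ell (W.bypass.dropUntil v hv) = walkLen ell W.bypass := by
          rw [← walkLen_append]
          exact congrArg (walkLen ell) hsplit.symm
        have h4 : walkLen ell W.bypass ≤ walkLen ell W :=
          walkLen_bypass_le ell hpos hsym W
        linarith
  -- the dichotomy: each vertex of P is in the zone of s or the zone of t
  have claimC : ∀ {x : V} (A : G.Walk s x) (B : G.Walk x t), P = A.append B →
      (walkLen ell A = d s x ∧ d s x < p / 2) ∨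
      (walkLen ell B = d x t ∧ d x t < p / 2) := by
    intro x A B hsplit
    have hxP : x ∈ P.support := by
      rw [hsplit, Walk.mem_support_append_iff]
      exact Or.inl A.end_mem_support
    have ha : d s x ≤ walkLen ell A := hd_le A
    have hb : d x t ≤ walkLen ell B := hd_le B
    have habp : walkLen ell A + walkLen ell B = p := by
      rw [← walkLen_append, ← hsplit, hgeo]
    have hpi1 : pi x ≤ d x s := (hpi x).2 ⟨s, hs, rfl⟩
    have hpi2 : pi x ≤ d x t := (hpi x).2 ⟨t, ht, rfl⟩
    have hpihalf : pi x < p / 2 := by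
      have hne := hnocentral x hxP
      have hle : pi x ≤ p / 2 := by
        rcases le_or_gt (walkLen ell A) (walkLen ell B) with hc | hc
        · have : d x s ≤ walkLen ell A := by rw [hd_symm x s]; exact ha
          linarith
        · linarith
      exact lt_of_le_of_ne hle hne
    obtain ⟨w, hwT, hww⟩ := (hpi x).1
    obtain ⟨W, hW⟩ := (hd x w).1
    by_cases hws : w = s
    · subst hws
      have h1 : p ≤ walkLen ell (W.reverse.append B) := L _ _ le_rfl hs ht hst
      rw [walkLen_append, walkLen_reverse ell hsym, hW, hww] at h1
      left
      have hxs : d w x = pi x := by rw [hd_symm w x, hww]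
      constructor
      · linarith
      · rw [hxs]; exact hpihalf
    · by_cases hwt : w = t
      · subst hwt
        have h1 : p ≤ walkLen ell (A.append W) := L _ _ le_rfl hs ht hst
        rw [walkLen_append, hW, hww] at h1
        right
        have hxt := hww
        constructor
        · linarith
        · rw [hxt]; exact hpihalf
      · exfalso
        have h1 : p ≤ walkLen ell (A.append W) :=
          L _ _ le_rfl hs hwT (fun hh => hws hh.symm)
        have h2 : p ≤ walkLen ell (W.reverse.append B) := L _ _ le_rfl hwT ht hwt
        rw [walkLen_append, hW, hww] at h1
        rw [walkLen_append, walkLen_reverse ell hsym, hW, hww] at h2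
        linarith
  have mono : ∀ {z w : V} (R : G.Walk z w), walkLen ell R = d z w →
      (∀ x ∈ R.support, d x w ≤ d z w) ∧
        R.support.Chain' (fun a b => d b w < d a w) := mono_aux ell hpos d hd
  -- main search for the switching edge
  have aux : ∀ (n : ℕ) {y : V} (Q : G.Walk y t), Q.length ≤ n →
      ∀ (P1 : G.Walk s y), P = P1.append Q →
      walkLen ell P1 = d s y → d s y < p / 2 →
      ∃ (u v : V) (h : G.Adj u v) (P1' : G.Walk s u) (P2 : G.Walk v t),
        P = P1'.append (SimpleGraph.Walk.cons h P2) ∧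
        (∀ x ∈ P1'.support, d s x < p / 2) ∧
        (∀ x ∈ P2.support, d x t < p / 2) ∧
        d s u + ell u v + d v t = p ∧
        P1'.support.Chain' (fun x y => d s x < d s y) ∧
        P2.support.Chain' (fun x y => d y t < d x t) := by
    intro n
    induction n with
    | zero =>
      intro y Q hlenQ P1 hsplit hlen hhalf
      exfalso
      cases Q with
      | nil =>
        have hPP : P = P1 := by rw [hsplit, Walk.append_nil]
        have hq : walkLen ell P1 = p := by rw [← hgeo, hPP]
        rw [hlen] at hq
        linarith
      | cons h Q' => simp at hlenQ
    | succ m ih =>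
      intro y Q hlenQ P1 hsplit hlen hhalf
      cases Q with
      | nil =>
        exfalso
        have hPP : P = P1 := by rw [hsplit, Walk.append_nil]
        have hq : walkLen ell P1 = p := by rw [← hgeo, hPP]
        rw [hlen] at hq
        linarith
      | @cons y b _ h Q' =>
        have hsplit' : P = (P1.append (Walk.cons h Walk.nil)).append Q' := by
          rw [hsplit, ← Walk.append_assoc, Walk.cons_append, Walk.nil_append]
        rcases claimC _ _ hsplit' with ⟨hA, hAlt⟩ | ⟨hB, hBlt⟩
        · have hlenQ' : Q'.length ≤ m := by
            simp only [Walk.length_cons] at hlenQ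
            omega
          exact ih Q' hlenQ' (P1.append (Walk.cons h Walk.nil)) hsplit' hA hAlt
        · refine ⟨y, b, h, P1, Q', hsplit, ?_, ?_, ?_, ?_, ?_⟩
          · have hrev : walkLen ell P1.reverse = d y s := by
              rw [walkLen_reverse ell hsym, hlen, hd_symm s y]
            obtain ⟨hall, _⟩ := mono P1.reverse hrev
            intro x hx
            have hx' : x ∈ P1.reverse.support := by
              rw [Walk.support_reverse]
              exact List.mem_reverse.mpr hx
            have h2 := hall x hx'
            rw [hd_symm s x]
            exact lt_of_le_of_lt h2 (by rw [← hd_symm s y]; exact hhalf)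
          · obtain ⟨hall, _⟩ := mono Q' hB
            intro x hx
            exact lt_of_le_of_lt (hall x hx) hBlt
          · have : walkLen ell P1 + (ell y b + walkLen ell Q') = p := by
              rw [← walkLen_cons ell h, ← walkLen_append, ← hsplit, hgeo]
            rw [← hlen, ← hB]
            linarith
          · have hrev : walkLen ell P1.reverse = d y s := by
              rw [walkLen_reverse ell hsym, hlen, hd_symm s y]
            obtain ⟨_, hch⟩ := mono P1.reverse hrev
            rw [Walk.support_reverse, List.Chain', List.isChain_reverse] at hch
            exact hch.imp (fun a b hab => by
              rw [hd_symm s a, hd_symm s b]; exact hab)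
          · exact (mono Q' hB).2
  refine ⟨hst, ?_⟩
  have h0 : walkLen ell (Walk.nil : G.Walk s s) = d s s := by
    rw [walkLen_nil, hd_self]
  have h1 : d s s < p / 2 := by rw [hd_self]; linarith
  exact aux P.length P le_rfl Walk.nil (by rw [Walk.nil_append]) h0 h1
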